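/- arXiv:1910.11633 — 2 statements merged into one kernel-verified Lean document; each statement's English description precedes it below -/
import Mathlib

section
/- Let T be the infinite Hermitian positive definite Toeplitz matrix with entries T(i,j) = (−1/2)^{|i−j|}. Then λ(T) = 1/3 and γ(T) = 3/4. -/
open Finset

/-- The quadratic form associated with an infinite matrix `M` evaluated at a finitely
supported sequence `v`: `Q_M(v) = Σ_{i,j} v_i · M(i,j) · conj(v_j)` (its real part;
for Hermitian `M` the sum is real). -/
noncomputable def QM (M : ℕ → ℕ → ℂ) (v : ℕ →₀ ℂ) : ℝ :=
  (∑ i ∈ v.support, ∑ j ∈ v.support, v i * M i j * (starRingEnd ℂ) (v j)).re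

/-- `γ(M) = inf { Q_M(v) : v finitely supported, v₀ = 1 }`. -/
noncomputable def gammaIdx (M : ℕ → ℕ → ℂ) : ℝ :=
  sInf {x | ∃ v : ℕ →₀ ℂ, v 0 = 1 ∧ QM M v = x}

/-- `λ(M) = inf { Q_M(v) : v finitely supported, Σ_i |v_i|² = 1 }`. -/
noncomputable def lambdaIdx (M : ℕ → ℕ → ℂ) : ℝ :=
  sInf {x | ∃ v : ℕ →₀ ℂ, (∑ i ∈ v.support, ‖v i‖ ^ 2) = 1 ∧ QM M v = x}

namespace ToepAux

noncomputable def cr : ℂ := -(1 / 2)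

lemma conj_cr : (starRingEnd ℂ) cr = cr := by
  rw [Complex.conj_eq_iff_im]
  norm_num [cr]

noncomputable def Sg (n : ℕ) (v : ℕ → ℂ) : ℂ := ∑ i ∈ Finset.range n, cr ^ i * v i

noncomputable def Qc (n : ℕ) (v : ℕ → ℂ) : ℂ :=
  ∑ i ∈ Finset.range n, ∑ j ∈ Finset.range n,
    v i * cr ^ ((i : ℤ) - (j : ℤ)).natAbs * (starRingEnd ℂ) (v j)

noncomputable def Gn (n : ℕ) (v : ℕ → ℂ) : ℝ :=
  ∑ k ∈ Finset.range n, Complex.normSq (Sg (n - k) (fun i => v (i + k)))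

lemma Sg_succ (n : ℕ) (v : ℕ → ℂ) :
    Sg (n + 1) v = v 0 + cr * Sg n (fun i => v (i + 1)) := by
  unfold Sg
  rw [Finset.sum_range_succ', Finset.mul_sum]
  rw [Finset.sum_congr rfl (fun i _ => show cr ^ (i+1) * v (i+1) = cr * (cr ^ i * v (i+1)) by ring)]
  simp [add_comm]

lemma Gn_succ (n : ℕ) (v : ℕ → ℂ) :
    Gn (n + 1) v = Complex.normSq (Sg (n + 1) v) + Gn n (fun i => v (i + 1)) := by
  unfold Gn
  rw [Finset.sum_range_succ']
  have h0 : Complex.normSq (Sg (n + 1 - 0) fun i => v (i + 0)) = Complex.normSq (Sg (n + 1) v) := by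
    norm_num
  have hs : ∑ k ∈ Finset.range n, Complex.normSq (Sg (n + 1 - (k + 1)) fun i => v (i + (k + 1)))
      = ∑ k ∈ Finset.range n, Complex.normSq (Sg (n - k) fun i => (fun i => v (i + 1)) (i + k)) := by
    refine Finset.sum_congr rfl fun k hk => ?_
    have hnk : n + 1 - (k + 1) = n - k := by omega
    rw [hnk]
    congr 1
  rw [h0, hs, add_comm]

lemma conj_Sg (n : ℕ) (v : ℕ → ℂ) :
    (starRingEnd ℂ) (Sg n v) = ∑ i ∈ Finset.range n, cr ^ i * (starRingEnd ℂ) (v i) := by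
  unfold Sg
  rw [map_sum]
  exact Finset.sum_congr rfl fun i _ => by rw [map_mul, map_pow, conj_cr]

lemma Qc_succ (n : ℕ) (v : ℕ → ℂ) :
    Qc (n + 1) v = v 0 * (starRingEnd ℂ) (v 0)
      + v 0 * (cr * (starRingEnd ℂ) (Sg n (fun i => v (i + 1))))
      + cr * Sg n (fun i => v (i + 1)) * (starRingEnd ℂ) (v 0)
      + Qc n (fun i => v (i + 1)) := by
  have h1 : ∀ i j : ℕ, (((i + 1 : ℕ) : ℤ) - ((j + 1 : ℕ) : ℤ)).natAbs = ((i : ℤ) - (j : ℤ)).natAbs := by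
    intro i j; congr 1; push_cast; ring
  have h2 : ∀ j : ℕ, (((0 : ℕ) : ℤ) - ((j + 1 : ℕ) : ℤ)).natAbs = j + 1 := by
    intro j; omega
  have h3 : ∀ i : ℕ, (((i + 1 : ℕ) : ℤ) - ((0 : ℕ) : ℤ)).natAbs = i + 1 := by
    intro i; omega
  unfold Qc
  simp only [Finset.sum_range_succ' _ n, h1, h2, h3]
  rw [Finset.sum_add_distrib]
  have e1 : ∑ i ∈ Finset.range n, v (i + 1) * cr ^ (i + 1) * (starRingEnd ℂ) (v 0)
      = cr * Sg n (fun i => v (i + 1)) * (starRingEnd ℂ) (v 0) := by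
    rw [Sg, Finset.mul_sum, Finset.sum_mul]
    exact Finset.sum_congr rfl fun i _ => by ring
  have e2 : ∑ j ∈ Finset.range n, v 0 * cr ^ (j + 1) * (starRingEnd ℂ) (v (j + 1))
      = v 0 * (cr * (starRingEnd ℂ) (Sg n (fun i => v (i + 1)))) := by
    rw [conj_Sg, Finset.mul_sum, Finset.mul_sum]
    exact Finset.sum_congr rfl fun i _ => by ring
  rw [e1, e2]
  simp only [Nat.cast_zero, sub_zero, Int.natAbs_zero, pow_zero, mul_one]
  ring

lemma key (n : ℕ) : ∀ v : ℕ → ℂ, Qc n v =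
    (((3 / 4 : ℝ) * Gn n v + (1 / 4 : ℝ) * Complex.normSq (Sg n v) : ℝ) : ℂ) := by
  induction n with
  | zero => intro v; simp [Qc, Gn, Sg]
  | succ n ih =>
    intro v
    rw [Qc_succ, ih, Gn_succ, Sg_succ]
    have hc : ∀ z : ℂ, ((Complex.normSq z : ℝ) : ℂ) = z * (starRingEnd ℂ) z :=
      fun z => (Complex.mul_conj z).symm
    simp only [Complex.ofReal_add, Complex.ofReal_mul, Complex.ofReal_div, Complex.ofReal_one,
      Complex.ofReal_ofNat, hc]
    rw [map_add, map_mul, conj_cr]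
    simp only [cr]
    ring


lemma key_re (n : ℕ) (v : ℕ → ℂ) :
    (Qc n v).re = 3 / 4 * Gn n v + 1 / 4 * Complex.normSq (Sg n v) := by
  rw [key n v, Complex.ofReal_re]

lemma bnd1 (a b : ℂ) : Complex.normSq (a + (1 / 2 : ℂ) * b)
    ≤ 3 / 2 * Complex.normSq a + 3 / 4 * Complex.normSq b := by
  have h : a + (1 / 2 : ℂ) * b = a + ((1 / 2 : ℝ) : ℂ) * b := by norm_num
  rw [h]
  simp only [Complex.normSq_apply, Complex.add_re, Complex.add_im, Complex.mul_re,
    Complex.mul_im, Complex.ofReal_re, Complex.ofReal_im]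
  nlinarith [sq_nonneg (a.re - b.re), sq_nonneg (a.im - b.im)]

lemma bnd2 (a b : ℂ) : Complex.normSq (a + (1 / 2 : ℂ) * b)
    ≤ 4 / 3 * Complex.normSq a + Complex.normSq b := by
  have h : a + (1 / 2 : ℂ) * b = a + ((1 / 2 : ℝ) : ℂ) * b := by norm_num
  rw [h]
  simp only [Complex.normSq_apply, Complex.add_re, Complex.add_im, Complex.mul_re,
    Complex.mul_im, Complex.ofReal_re, Complex.ofReal_im]
  nlinarith [sq_nonneg (a.re - 3 / 2 * b.re), sq_nonneg (a.im - 3 / 2 * b.im)]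

/-- the `s`-decomposition of `v`. -/
lemma v_eq (n : ℕ) (v : ℕ → ℂ) (k : ℕ) (hk : k < n) :
    v k = Sg (n - k) (fun i => v (i + k)) + (1 / 2 : ℂ) * Sg (n - (k + 1)) (fun i => v (i + (k + 1))) := by
  have hm : n - k = (n - (k + 1)) + 1 := by omega
  have h := Sg_succ (n - (k + 1)) (fun i => v (i + k))
  rw [hm, h]
  have h2 : (fun i => (fun i => v (i + k)) (i + 1)) = fun i => v (i + (k + 1)) := by
    funext i; show v (i + 1 + k) = v (i + (k + 1)); congr 1; omega
  rw [h2]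
  have h3 : (0 : ℕ) + k = k := by omega
  rw [h3]
  simp only [cr]
  ring

lemma Sg_zero_fun (v : ℕ → ℂ) : Sg 0 v = 0 := by simp [Sg]

lemma Qc_re_ge_norm (n : ℕ) (v : ℕ → ℂ) :
    1 / 3 * ∑ i ∈ Finset.range n, Complex.normSq (v i) ≤ (Qc n v).re := by
  rw [key_re]
  set s : ℕ → ℂ := fun k => Sg (n - k) (fun i => v (i + k)) with hs
  have hG : Gn n v = ∑ k ∈ Finset.range n, Complex.normSq (s k) := rfl
  have hS0 : Sg n v = s 0 := by
    simp only [hs, Nat.sub_zero, add_zero]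
  have hsum : ∑ i ∈ Finset.range n, Complex.normSq (v i)
      ≤ ∑ k ∈ Finset.range n, (3 / 2 * Complex.normSq (s k) + 3 / 4 * Complex.normSq (s (k + 1))) := by
    refine Finset.sum_le_sum fun k hk => ?_
    rw [v_eq n v k (Finset.mem_range.mp hk)]
    exact bnd1 _ _
  rw [Finset.sum_add_distrib, ← Finset.mul_sum, ← Finset.mul_sum] at hsum
  have hshift : ∑ k ∈ Finset.range n, Complex.normSq (s (k + 1))
      = ∑ k ∈ Finset.range n, Complex.normSq (s k) - Complex.normSq (s 0) := by
    have h1 := Finset.sum_range_succ' (fun k => Complex.normSq (s k)) n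
    have h2 := Finset.sum_range_succ (fun k => Complex.normSq (s k)) n
    have hn : Complex.normSq (s n) = 0 := by
      simp only [hs, Nat.sub_self]
      rw [Sg_zero_fun]
      simp
    rw [h1] at h2
    rw [hn] at h2
    linarith
  rw [hshift] at hsum
  have h0 : 0 ≤ Complex.normSq (s 0) := Complex.normSq_nonneg _
  rw [hG, hS0]
  linarith

lemma Qc_re_ge_gamma (n : ℕ) (hn : 2 ≤ n) (v : ℕ → ℂ) :
    3 / 4 * Complex.normSq (v 0) ≤ (Qc n v).re := by
  rw [key_re]
  set s : ℕ → ℂ := fun k => Sg (n - k) (fun i => v (i + k)) with hs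
  have hS0 : Sg n v = s 0 := by simp only [hs, Nat.sub_zero, add_zero]
  have hv0 : v 0 = s 0 + (1 / 2 : ℂ) * s 1 := v_eq n v 0 (by omega)
  have hG : Complex.normSq (s 0) + Complex.normSq (s 1) ≤ Gn n v := by
    obtain ⟨m, rfl⟩ : ∃ m, n = m + 2 := ⟨n - 2, by omega⟩
    show _ ≤ ∑ k ∈ Finset.range (m + 2), Complex.normSq (s k)
    rw [Finset.sum_range_succ' (fun k => Complex.normSq (s k)) (m + 1),
      Finset.sum_range_succ' (fun k => Complex.normSq (s (k + 1))) m]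
    have hpos : 0 ≤ ∑ k ∈ Finset.range m, Complex.normSq (s (k + 1 + 1)) :=
      Finset.sum_nonneg fun k _ => Complex.normSq_nonneg _
    linarith
  have hb := bnd2 (s 0) (s 1)
  rw [hv0, hS0]
  nlinarith [Complex.normSq_nonneg (s 0), Complex.normSq_nonneg (s 1)]


lemma cr_cast : cr = ((-(1 / 2) : ℝ) : ℂ) := by norm_num [cr]

lemma QM_eq_Qc {T : ℕ → ℕ → ℂ}
    (hT : ∀ i j : ℕ, T i j = (-(1 / 2) : ℂ) ^ ((i : ℤ) - (j : ℤ)).natAbs)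
    (v : ℕ →₀ ℂ) (n : ℕ) (h : v.support ⊆ Finset.range n) :
    QM T v = (Qc n (fun i => v i)).re := by
  have hout : ∀ i ∈ Finset.range n, i ∉ v.support →
      ∑ j ∈ v.support, v i * T i j * (starRingEnd ℂ) (v j) = 0 := by
    intro i _ hi
    have hv : v i = 0 := Finsupp.notMem_support_iff.mp hi
    simp [hv]
  have hin : ∀ i : ℕ, ∀ j ∈ Finset.range n, j ∉ v.support →
      v i * T i j * (starRingEnd ℂ) (v j) = 0 := by
    intro i j _ hj
    have hv : v j = 0 := Finsupp.notMem_support_iff.mp hj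
    simp [hv]
  unfold QM Qc
  congr 1
  rw [Finset.sum_subset h hout]
  refine Finset.sum_congr rfl fun i _ => ?_
  rw [Finset.sum_subset h (hin i)]
  refine Finset.sum_congr rfl fun j _ => ?_
  rw [hT i j]
  rfl

lemma geo_sq (m : ℕ) :
    (∑ i ∈ Finset.range m, (-(1 / 2) : ℝ) ^ i) ^ 2 ≤ 4 / 9 * (1 + 3 * (1 / 2 : ℝ) ^ m) := by
  have hne : (-(1 / 2) : ℝ) ≠ 1 := by norm_num
  rw [geom_sum_eq hne]
  have hx : |(-(1 / 2) : ℝ) ^ m| = (1 / 2 : ℝ) ^ m := by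
    rw [abs_pow, show |(-(1 / 2) : ℝ)| = 1 / 2 by rw [abs_neg]; norm_num]
  have h2 := abs_le.mp (le_of_eq hx)
  have h1 : (1 / 2 : ℝ) ^ m ≤ 1 := by
    apply pow_le_one₀ <;> norm_num
  have h3 : (0 : ℝ) ≤ (1 / 2 : ℝ) ^ m := by positivity
  set x := (-(1 / 2) : ℝ) ^ m with hxdef
  have hd : ((x - 1) / (-(1 / 2) - 1)) ^ 2 = 4 / 9 * (x - 1) ^ 2 := by
    field_simp
    ring
  rw [hd]
  nlinarith [h2.1, h2.2]

lemma geo_tail (n : ℕ) : ∑ k ∈ Finset.range n, (1 / 2 : ℝ) ^ (n - k) ≤ 1 := by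
  induction n with
  | zero => simp
  | succ n ih =>
    rw [Finset.sum_range_succ]
    have hstep : ∑ k ∈ Finset.range n, (1 / 2 : ℝ) ^ (n + 1 - k)
        = 1 / 2 * ∑ k ∈ Finset.range n, (1 / 2 : ℝ) ^ (n - k) := by
      rw [Finset.mul_sum]
      refine Finset.sum_congr rfl fun k hk => ?_
      have hnk : n + 1 - k = (n - k) + 1 := by
        have := Finset.mem_range.mp hk; omega
      rw [hnk, pow_succ]
      ring
    rw [hstep]
    have h : n + 1 - n = 1 := by omega
    rw [h]
    norm_num
    linarith


noncomputable def w2 : ℕ →₀ ℂ := Finsupp.single 0 1 + Finsupp.single 1 (1 / 2 : ℂ)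

lemma w2_zero : w2 0 = 1 := by
  rw [w2, Finsupp.add_apply, Finsupp.single_eq_same,
    Finsupp.single_eq_of_ne' (by norm_num : (1 : ℕ) ≠ 0)]
  norm_num

lemma w2_one : w2 1 = 1 / 2 := by
  rw [w2, Finsupp.add_apply, Finsupp.single_eq_same,
    Finsupp.single_eq_of_ne' (by norm_num : (0 : ℕ) ≠ 1)]
  norm_num

lemma w2_supp : w2.support ⊆ Finset.range 2 := by
  refine (Finsupp.support_add).trans ?_
  intro i hi
  rcases Finset.mem_union.mp hi with h | h
  · have := Finsupp.support_single_subset h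
    simp only [Finset.mem_singleton] at this
    simp [this]
  · have := Finsupp.support_single_subset h
    simp only [Finset.mem_singleton] at this
    simp [this]

lemma QM_w2 {T : ℕ → ℕ → ℂ}
    (hT : ∀ i j : ℕ, T i j = (-(1 / 2) : ℂ) ^ ((i : ℤ) - (j : ℤ)).natAbs) :
    QM T w2 = 3 / 4 := by
  rw [QM_eq_Qc hT w2 2 w2_supp]
  have : Qc 2 (fun i => w2 i) = ((3 / 4 : ℝ) : ℂ) := by
    unfold Qc
    simp only [Finset.sum_range_succ, Finset.sum_range_zero]
    rw [w2_zero, w2_one]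
    norm_num [cr]
    ring
  rw [this, Complex.ofReal_re]


noncomputable def wc (n : ℕ) : ℝ := Real.sqrt ((n : ℝ)⁻¹)

noncomputable def wn (n : ℕ) : ℕ →₀ ℂ :=
  Finsupp.indicator (Finset.range n) (fun _ _ => ((wc n : ℝ) : ℂ))

lemma wc_nonneg (n : ℕ) : 0 ≤ wc n := Real.sqrt_nonneg _

lemma wc_sq (n : ℕ) : wc n ^ 2 = (n : ℝ)⁻¹ := by
  rw [wc, sq, Real.mul_self_sqrt (by positivity)]

lemma wn_mem (n : ℕ) {i : ℕ} (hi : i < n) : wn n i = ((wc n : ℝ) : ℂ) :=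
  Finsupp.indicator_of_mem (Finset.mem_range.mpr hi) _

lemma wn_supp (n : ℕ) : (wn n).support ⊆ Finset.range n :=
  Finsupp.support_indicator_subset _ _

lemma wn_constraint (n : ℕ) (hn : 1 ≤ n) :
    (∑ i ∈ (wn n).support, ‖wn n i‖ ^ 2) = 1 := by
  rw [Finset.sum_subset (wn_supp n) (by
    intro i _ hi
    rw [Finsupp.notMem_support_iff.mp hi]
    simp)]
  have : ∀ i ∈ Finset.range n, ‖wn n i‖ ^ 2 = (n : ℝ)⁻¹ := by
    intro i hi
    rw [wn_mem n (Finset.mem_range.mp hi), Complex.norm_real, Real.norm_eq_abs,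
      abs_of_nonneg (wc_nonneg n), wc_sq]
  rw [Finset.sum_congr rfl this, Finset.sum_const, Finset.card_range, nsmul_eq_mul]
  field_simp

lemma hns (x y : ℝ) : Complex.normSq ((x : ℂ) * (y : ℂ)) = x ^ 2 * y ^ 2 := by
  rw [Complex.normSq_mul, Complex.normSq_ofReal, Complex.normSq_ofReal]
  ring

lemma wn_Sg (n : ℕ) (k : ℕ) (hk : k ≤ n) :
    Sg (n - k) (fun i => wn n (i + k))
      = ((wc n : ℝ) : ℂ) * (((∑ i ∈ Finset.range (n - k), (-(1 / 2) : ℝ) ^ i) : ℝ) : ℂ) := by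
  unfold Sg
  push_cast
  rw [Finset.mul_sum]
  refine Finset.sum_congr rfl fun i hi => ?_
  rw [wn_mem n (by have := Finset.mem_range.mp hi; omega), cr_cast]
  push_cast
  ring

lemma QM_wn {T : ℕ → ℕ → ℂ}
    (hT : ∀ i j : ℕ, T i j = (-(1 / 2) : ℂ) ^ ((i : ℤ) - (j : ℤ)).natAbs)
    (n : ℕ) (hn : 1 ≤ n) :
    QM T (wn n) ≤ 1 / 3 + 2 / n := by
  have hnR : (0 : ℝ) < n := by exact_mod_cast hn
  rw [QM_eq_Qc hT (wn n) n (wn_supp n), key_re]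
  have hGn : Gn n (fun i => wn n i) ≤ (n : ℝ)⁻¹ * (4 / 9 * ((n : ℝ) + 3)) := by
    unfold Gn
    have hterm : ∀ k ∈ Finset.range n,
        Complex.normSq (Sg (n - k) (fun i => wn n (i + k)))
          ≤ (n : ℝ)⁻¹ * (4 / 9 * (1 + 3 * (1 / 2 : ℝ) ^ (n - k))) := by
      intro k hk
      rw [wn_Sg n k (le_of_lt (Finset.mem_range.mp hk)), hns, wc_sq]
      have hg := geo_sq (n - k)
      have : (0 : ℝ) ≤ (n : ℝ)⁻¹ := by positivity
      nlinarith
    refine le_trans (Finset.sum_le_sum hterm) ?_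
    have heq : ∑ k ∈ Finset.range n, (n : ℝ)⁻¹ * (4 / 9 * (1 + 3 * (1 / 2 : ℝ) ^ (n - k)))
        = (n : ℝ)⁻¹ * (4 / 9 * ((n : ℝ) + 3 * ∑ k ∈ Finset.range n, (1 / 2 : ℝ) ^ (n - k))) := by
      simp only [mul_add, mul_one, Finset.sum_add_distrib, Finset.sum_const,
        Finset.card_range, nsmul_eq_mul, Finset.mul_sum]
      ring_nf
    rw [heq]
    have ht := geo_tail n
    have : (0 : ℝ) ≤ (n : ℝ)⁻¹ := by positivity
    nlinarith
  have hS : Complex.normSq (Sg n (fun i => wn n i)) ≤ (n : ℝ)⁻¹ * (16 / 9) := by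
    have h0 : Sg n (fun i => wn n i) = Sg (n - 0) (fun i => wn n (i + 0)) := by norm_num
    rw [h0, wn_Sg n 0 (by omega), hns, wc_sq]
    have hg := geo_sq (n - 0)
    have h1 : (1 / 2 : ℝ) ^ (n - 0) ≤ 1 := by
      apply pow_le_one₀ <;> norm_num
    have : (0 : ℝ) ≤ (n : ℝ)⁻¹ := by positivity
    nlinarith
  have h13 : (n : ℝ)⁻¹ * (n : ℝ) = 1 := by field_simp
  have h2n : (n : ℝ)⁻¹ * 2 ≤ 2 / (n : ℝ) + 0 := by rw [div_eq_mul_inv]; ring_nf; simp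
  have hinv : (0 : ℝ) ≤ (n : ℝ)⁻¹ := by positivity
  nlinarith

end ToepAux

/-- for the Hermitian positive definite Toeplitz matrix
`T(i,j) = (−1/2)^{|i−j|}` one has `λ(T) = 1/3` and `γ(T) = 3/4`. -/
theorem lambda_gamma_of_example_toeplitz (T : ℕ → ℕ → ℂ)
    (hT : ∀ i j : ℕ, T i j = (-(1 / 2) : ℂ) ^ ((i : ℤ) - (j : ℤ)).natAbs) :
    lambdaIdx T = 1 / 3 ∧ gammaIdx T = 3 / 4 := by
  have hsupp : ∀ v : ℕ →₀ ℂ, ∀ m : ℕ, ∃ n, m ≤ n ∧ v.support ⊆ Finset.range n := by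
    intro v m
    refine ⟨max m (v.support.sup id + 1), le_max_left _ _, fun i hi => Finset.mem_range.mpr ?_⟩
    have h1 : i ≤ v.support.sup id := Finset.le_sup (f := id) hi
    have h2 := le_max_right m (v.support.sup id + 1)
    omega
  -- the λ lower bound
  have hlb : ∀ x ∈ {x | ∃ v : ℕ →₀ ℂ,
      (∑ i ∈ v.support, ‖v i‖ ^ 2) = 1 ∧ QM T v = x}, 1 / 3 ≤ x := by
    rintro x ⟨v, hv1, rfl⟩
    obtain ⟨n, -, hsub⟩ := hsupp v 0
    rw [ToepAux.QM_eq_Qc hT v n hsub]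
    have hge := ToepAux.Qc_re_ge_norm n (fun i => v i)
    have hsum : ∑ i ∈ Finset.range n, Complex.normSq (v i) = 1 := by
      have h1 : ∑ i ∈ v.support, ‖v i‖ ^ 2
          = ∑ i ∈ Finset.range n, ‖v i‖ ^ 2 :=
        Finset.sum_subset hsub (fun i _ hi => by rw [Finsupp.notMem_support_iff.mp hi]; simp)
      rw [← hv1, h1]
      exact Finset.sum_congr rfl fun i _ => (Complex.sq_norm _).symm
    rw [hsum] at hge
    linarith
  have hbdd : BddBelow {x | ∃ v : ℕ →₀ ℂ,
      (∑ i ∈ v.support, ‖v i‖ ^ 2) = 1 ∧ QM T v = x} := ⟨1 / 3, hlb⟩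
  have hone : QM T (ToepAux.wn 1) ∈ {x | ∃ v : ℕ →₀ ℂ,
      (∑ i ∈ v.support, ‖v i‖ ^ 2) = 1 ∧ QM T v = x} :=
    ⟨ToepAux.wn 1, ToepAux.wn_constraint 1 le_rfl, rfl⟩
  constructor
  · refine le_antisymm ?_ (le_csInf ⟨_, hone⟩ hlb)
    apply le_of_forall_pos_le_add
    intro ε hε
    obtain ⟨n, hn⟩ := exists_nat_gt (2 / ε)
    have hpos : (0 : ℝ) < 2 / ε := by positivity
    have hnR : (0 : ℝ) < n := lt_trans hpos hn
    have hn0 : 0 < n := by exact_mod_cast hnR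
    have hn1 : 1 ≤ n := hn0
    have hmem : QM T (ToepAux.wn n) ∈ {x | ∃ v : ℕ →₀ ℂ,
        (∑ i ∈ v.support, ‖v i‖ ^ 2) = 1 ∧ QM T v = x} :=
      ⟨ToepAux.wn n, ToepAux.wn_constraint n hn1, rfl⟩
    have hq := ToepAux.QM_wn hT n hn1
    have h2n : 2 / (n : ℝ) < ε := by
      rw [div_lt_iff₀ hnR]
      have h := (div_lt_iff₀ hε).mp hn
      nlinarith
    calc lambdaIdx T ≤ QM T (ToepAux.wn n) := csInf_le hbdd hmem
      _ ≤ 1 / 3 + 2 / n := hq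
      _ ≤ 1 / 3 + ε := by linarith
  · have hglb : ∀ x ∈ {x | ∃ v : ℕ →₀ ℂ, v 0 = 1 ∧ QM T v = x}, 3 / 4 ≤ x := by
      rintro x ⟨v, hv0, rfl⟩
      obtain ⟨n, hn2, hsub⟩ := hsupp v 2
      rw [ToepAux.QM_eq_Qc hT v n hsub]
      have hge := ToepAux.Qc_re_ge_gamma n hn2 (fun i => v i)
      simp only [hv0] at hge
      simpa using hge
    have hgmem : (3 / 4 : ℝ) ∈ {x | ∃ v : ℕ →₀ ℂ, v 0 = 1 ∧ QM T v = x} :=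
      ⟨ToepAux.w2, ToepAux.w2_zero, ToepAux.QM_w2 hT⟩
    exact le_antisymm (csInf_le ⟨3 / 4, hglb⟩ hgmem) (le_csInf ⟨3 / 4, hgmem⟩ hglb)
end

section
/- Let μ be a finite positive Borel measure on ℂ with compact and infinite support such that 0 ∉ supp(μ), and let M = M(μ) be its moment matrix. Then the following are equivalent: (1) γ(M) = 0; (2) for every k ∈ ℤ, the function z ↦ z^k belongs to the closure in L²(μ) of the linear span of the functions z ↦ z^{k+1}, z ↦ z^{k+2}, … . -/
open MeasureTheory Finset

/-- The (closed) support of a Borel measure on `ℂ`: the set of points all of whose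
neighbourhoods have positive measure. -/
def measSupport (μ : Measure ℂ) : Set ℂ :=
  {z : ℂ | ∀ U ∈ nhds z, μ U ≠ 0}

/-- The moment matrix of a compactly supported measure `μ` on `ℂ`:
`M(μ)(i,j) = ∫ z^i conj(z)^j dμ(z)`. -/
noncomputable def momentMatrix (μ : Measure ℂ) : ℕ → ℕ → ℂ :=
  fun i j => ∫ z, z ^ i * (starRingEnd ℂ) z ^ j ∂μ

/-! ### Auxiliary lemmas -/

lemma ae_mem_measSupport (μ : Measure ℂ) : ∀ᵐ z ∂μ, z ∈ measSupport μ := by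
  rw [ae_iff]
  apply measure_null_of_locally_null
  intro x hx
  simp only [Set.mem_setOf_eq, measSupport, not_forall, not_ne_iff] at hx
  obtain ⟨U, hU, hU0⟩ := hx
  exact ⟨U, mem_nhdsWithin_of_mem_nhds hU, hU0⟩

lemma measSupport_eps {μ : Measure ℂ} (h0 : (0 : ℂ) ∉ measSupport μ) :
    ∃ ε > 0, ∀ z ∈ measSupport μ, ε ≤ ‖z‖ := by
  simp only [measSupport, Set.mem_setOf_eq, not_forall, not_ne_iff] at h0
  obtain ⟨U, hU, hU0⟩ := h0
  obtain ⟨ε, hε, hball⟩ := Metric.mem_nhds_iff.mp hU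
  refine ⟨ε, hε, fun z hz => ?_⟩
  by_contra hlt
  push_neg at hlt
  refine hz (Metric.ball 0 ε) ?_ (measure_mono_null hball hU0)
  exact Metric.isOpen_ball.mem_nhds (by simpa [Complex.dist_eq] using hlt)

lemma measSupport_ne_zero {μ : Measure ℂ} (h0 : (0 : ℂ) ∉ measSupport μ) :
    ∀ᵐ z ∂μ, z ≠ 0 := by
  filter_upwards [ae_mem_measSupport μ] with z hz
  rintro rfl; exact h0 hz

lemma zpow_bound {μ : Measure ℂ} (hc : IsCompact (measSupport μ))
    (h0 : (0 : ℂ) ∉ measSupport μ) (k : ℤ) :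
    ∃ C, 0 ≤ C ∧ ∀ z ∈ measSupport μ, ‖z ^ k‖ ≤ C := by
  obtain ⟨ε, hε, hεle⟩ := measSupport_eps h0
  obtain ⟨R, hR⟩ := hc.isBounded.exists_norm_le
  cases k with
  | ofNat n =>
    refine ⟨max R 1 ^ n, by positivity, fun z hz => ?_⟩
    rw [Int.ofNat_eq_coe, zpow_natCast, norm_pow]
    exact pow_le_pow_left₀ (norm_nonneg z) ((hR z hz).trans (le_max_left _ _)) n
  | negSucc n =>
    refine ⟨(ε ^ (n + 1))⁻¹, by positivity, fun z hz => ?_⟩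
    rw [zpow_negSucc, norm_inv, norm_pow]
    exact inv_anti₀ (by positivity) (pow_le_pow_left₀ hε.le (hεle z hz) _)

lemma memLp_zpow_mul {μ : Measure ℂ} (k : ℤ) {C : ℝ}
    (hC : ∀ z ∈ measSupport μ, ‖z ^ k‖ ≤ C) (f : Lp ℂ 2 μ) :
    MemLp (fun z => z ^ k * f z) 2 μ := by
  refine MemLp.of_le_mul (c := C) (Lp.memLp f)
    (((measurable_id.pow_const k).aestronglyMeasurable).mul (Lp.aestronglyMeasurable f)) ?_
  filter_upwards [ae_mem_measSupport μ] with z hz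
  rw [norm_mul]
  exact mul_le_mul_of_nonneg_right (hC z hz) (norm_nonneg _)

/-- Multiplication by `z ^ k` as a continuous linear operator on `L²(μ)`. -/
noncomputable def mulOp (μ : Measure ℂ) (k : ℤ) (C : ℝ) (hC0 : 0 ≤ C)
    (hC : ∀ z ∈ measSupport μ, ‖z ^ k‖ ≤ C) : Lp ℂ 2 μ →L[ℂ] Lp ℂ 2 μ := by
  refine LinearMap.mkContinuous
    { toFun := fun f => (memLp_zpow_mul k hC f).toLp _
      map_add' := fun f g => ?_
      map_smul' := fun c f => ?_ } C (fun f => ?_)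
  · rw [← MemLp.toLp_add (memLp_zpow_mul k hC f) (memLp_zpow_mul k hC g)]
    refine MemLp.toLp_congr _ _ ?_
    filter_upwards [Lp.coeFn_add f g] with z hz
    rw [hz]; simp [mul_add]
  · rw [RingHom.id_apply, ← MemLp.toLp_const_smul c (memLp_zpow_mul k hC f)]
    refine MemLp.toLp_congr (memLp_zpow_mul k hC (c • f)) ((memLp_zpow_mul k hC f).const_smul c) ?_
    filter_upwards [Lp.coeFn_smul c f] with z hz
    rw [hz]; simp only [Pi.smul_apply, smul_eq_mul]; ring
  · simp only [LinearMap.coe_mk, AddHom.coe_mk]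
    rw [Lp.norm_toLp]
    have h1 : eLpNorm (fun z => z ^ k * f z) 2 μ ≤ eLpNorm (C • (f : ℂ → ℂ)) 2 μ := by
      apply eLpNorm_mono_ae
      filter_upwards [ae_mem_measSupport μ] with z hz
      simp only [Pi.smul_apply, norm_smul, norm_mul, Real.norm_eq_abs, abs_of_nonneg hC0]
      exact mul_le_mul_of_nonneg_right (hC z hz) (norm_nonneg _)
    rw [eLpNorm_const_smul] at h1
    calc (eLpNorm (fun z => z ^ k * f z) 2 μ).toReal
        ≤ ((‖C‖₊ : ENNReal) * eLpNorm (f : ℂ → ℂ) 2 μ).toReal := by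
          apply ENNReal.toReal_mono _ h1
          exact ENNReal.mul_ne_top ENNReal.coe_ne_top (Lp.eLpNorm_ne_top f)
      _ = C * ‖f‖ := by
          rw [ENNReal.toReal_mul, Lp.norm_def, ENNReal.coe_toReal, coe_nnnorm,
            Real.norm_eq_abs, abs_of_nonneg hC0]

lemma mulOp_coeFn {μ : Measure ℂ} (k : ℤ) {C : ℝ} (hC0 : 0 ≤ C)
    (hC : ∀ z ∈ measSupport μ, ‖z ^ k‖ ≤ C) (f : Lp ℂ 2 μ) :
    (mulOp μ k C hC0 hC f : ℂ → ℂ) =ᵐ[μ] fun z => z ^ k * f z :=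
  MemLp.coeFn_toLp (memLp_zpow_mul k hC f)

lemma mulOp_zmon {μ : Measure ℂ} (h0 : (0 : ℂ) ∉ measSupport μ)
    (zmon : ℤ → Lp ℂ 2 μ) (hzmon : ∀ k : ℤ, (zmon k : ℂ → ℂ) =ᵐ[μ] fun z => z ^ k)
    (k m : ℤ) {C : ℝ} (hC0 : 0 ≤ C) (hC : ∀ z ∈ measSupport μ, ‖z ^ k‖ ≤ C) :
    mulOp μ k C hC0 hC (zmon m) = zmon (m + k) := by
  apply Lp.ext
  filter_upwards [mulOp_coeFn k hC0 hC (zmon m), hzmon m, hzmon (m + k),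
    measSupport_ne_zero h0] with z h1 h2 h3 hz
  rw [h1, h2, h3, zpow_add₀ hz, mul_comm]

lemma shift_mem {μ : Measure ℂ} (hc : IsCompact (measSupport μ))
    (h0 : (0 : ℂ) ∉ measSupport μ)
    (zmon : ℤ → Lp ℂ 2 μ) (hzmon : ∀ k : ℤ, (zmon k : ℂ → ℂ) =ᵐ[μ] fun z => z ^ k)
    (k : ℤ)
    (h : zmon 0 ∈ closure
      (Submodule.span ℂ {f : Lp ℂ 2 μ | ∃ m : ℤ, 0 < m ∧ f = zmon m} : Set (Lp ℂ 2 μ))) :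
    zmon k ∈ closure
      (Submodule.span ℂ {f : Lp ℂ 2 μ | ∃ m : ℤ, k < m ∧ f = zmon m} : Set (Lp ℂ 2 μ)) := by
  obtain ⟨C, hC0, hC⟩ := zpow_bound hc h0 k
  set T := mulOp μ k C hC0 hC with hT
  have hT0 : T (zmon 0) = zmon k := by
    rw [hT, mulOp_zmon h0 zmon hzmon, zero_add]
  have himg : T '' (Submodule.span ℂ {f : Lp ℂ 2 μ | ∃ m : ℤ, 0 < m ∧ f = zmon m} : Set _)
      ⊆ (Submodule.span ℂ {f : Lp ℂ 2 μ | ∃ m : ℤ, k < m ∧ f = zmon m} : Set _) := by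
    rintro x ⟨y, hy, rfl⟩
    have h1 : T y ∈ Submodule.map (T : Lp ℂ 2 μ →ₗ[ℂ] Lp ℂ 2 μ)
        (Submodule.span ℂ {f : Lp ℂ 2 μ | ∃ m : ℤ, 0 < m ∧ f = zmon m}) :=
      Submodule.mem_map_of_mem hy
    rw [Submodule.map_span] at h1
    refine Submodule.span_le.mpr ?_ h1
    rintro x ⟨f, ⟨m, hm, rfl⟩, rfl⟩
    refine Submodule.subset_span ⟨m + k, by omega, ?_⟩
    rw [ContinuousLinearMap.coe_coe, hT, mulOp_zmon h0 zmon hzmon]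
  refine closure_mono himg ?_
  rw [← hT0]
  exact image_closure_subset_closure_image T.continuous ⟨zmon 0, h, rfl⟩

lemma inner_zmon {μ : Measure ℂ} (zmon : ℤ → Lp ℂ 2 μ)
    (hzmon : ∀ k : ℤ, (zmon k : ℂ → ℂ) =ᵐ[μ] fun z => z ^ k) (i j : ℕ) :
    (inner ℂ (zmon (i : ℤ)) (zmon (j : ℤ)) : ℂ) = (starRingEnd ℂ) (momentMatrix μ i j) := by
  rw [MeasureTheory.L2.inner_def, momentMatrix, ← integral_conj]
  apply integral_congr_ae
  filter_upwards [hzmon (i : ℤ), hzmon (j : ℤ)] with z h1 h2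
  rw [RCLike.inner_apply, h1, h2]
  simp only [map_mul, map_pow, Complex.conj_conj, zpow_natCast]
  rw [mul_comm]

lemma QM_eq_norm_sq {μ : Measure ℂ} (zmon : ℤ → Lp ℂ 2 μ)
    (hzmon : ∀ k : ℤ, (zmon k : ℂ → ℂ) =ᵐ[μ] fun z => z ^ k) (v : ℕ →₀ ℂ) :
    QM (momentMatrix μ) v
      = ‖(Finsupp.linearCombination ℂ (fun i : ℕ => zmon (i : ℤ))) v‖ ^ 2 := by
  rw [← inner_self_eq_norm_sq (𝕜 := ℂ)]
  rw [Finsupp.linearCombination_apply, Finsupp.sum]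
  rw [sum_inner]
  have : ∀ i ∈ v.support,
      (inner ℂ (v i • zmon (i:ℤ)) (∑ j ∈ v.support, v j • zmon (j:ℤ)) : ℂ)
      = ∑ j ∈ v.support, (starRingEnd ℂ) (v i * momentMatrix μ i j * (starRingEnd ℂ) (v j)) := by
    intro i _
    rw [inner_sum]
    apply Finset.sum_congr rfl
    intro j _
    rw [inner_smul_left, inner_smul_right, inner_zmon zmon hzmon]
    simp only [map_mul, Complex.conj_conj]
    ring
  rw [Finset.sum_congr rfl this]
  rw [QM]
  simp only [← map_sum]
  rw [RCLike.conj_re]; rfl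

lemma span_repr {μ : Measure ℂ} (zmon : ℤ → Lp ℂ 2 μ) (g : Lp ℂ 2 μ)
    (hg : g ∈ Submodule.span ℂ {f : Lp ℂ 2 μ | ∃ m : ℤ, 0 < m ∧ f = zmon m}) :
    ∃ v : ℕ →₀ ℂ, v 0 = 0 ∧
      (Finsupp.linearCombination ℂ (fun i : ℕ => zmon (i : ℤ))) v = g := by
  induction hg using Submodule.span_induction with
  | mem f hf =>
    obtain ⟨m, hm, rfl⟩ := hf
    refine ⟨Finsupp.single m.toNat 1, ?_, ?_⟩
    · rw [Finsupp.single_apply, if_neg (by omega)]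
    · rw [Finsupp.linearCombination_single, Int.toNat_of_nonneg hm.le, one_smul]
  | zero => exact ⟨0, rfl, map_zero _⟩
  | add x y hx hy ihx ihy =>
    obtain ⟨v1, hv1, hv1'⟩ := ihx
    obtain ⟨v2, hv2, hv2'⟩ := ihy
    exact ⟨v1 + v2, by simp [hv1, hv2], by rw [map_add, hv1', hv2']⟩
  | smul c x hx ih =>
    obtain ⟨v, hv, hv'⟩ := ih
    exact ⟨c • v, by simp [hv], by rw [_root_.map_smul, hv']⟩

lemma valueSet_eq {μ : Measure ℂ} (zmon : ℤ → Lp ℂ 2 μ)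
    (hzmon : ∀ k : ℤ, (zmon k : ℂ → ℂ) =ᵐ[μ] fun z => z ^ k) :
    {x | ∃ v : ℕ →₀ ℂ, v 0 = 1 ∧ QM (momentMatrix μ) v = x}
      = {x | ∃ g ∈ Submodule.span ℂ {f : Lp ℂ 2 μ | ∃ m : ℤ, 0 < m ∧ f = zmon m},
          ‖zmon 0 + g‖ ^ 2 = x} := by
  ext x
  constructor
  · rintro ⟨v, hv0, rfl⟩
    have hmem : (0 : ℕ) ∈ v.support := Finsupp.mem_support_iff.mpr (by rw [hv0]; exact one_ne_zero)
    refine ⟨∑ i ∈ v.support.erase 0, v i • zmon (i : ℤ), ?_, ?_⟩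
    · refine Submodule.sum_mem _ fun i hi => Submodule.smul_mem _ _ (Submodule.subset_span ?_)
      have hi0 : i ≠ 0 := Finset.ne_of_mem_erase hi
      exact ⟨(i : ℤ), by omega, rfl⟩
    · rw [QM_eq_norm_sq zmon hzmon, Finsupp.linearCombination_apply, Finsupp.sum]
      rw [← Finset.add_sum_erase _ _ hmem, hv0, one_smul]
      norm_num
  · rintro ⟨g, hg, rfl⟩
    obtain ⟨v, hv0, hvg⟩ := span_repr zmon g hg
    refine ⟨Finsupp.single 0 1 + v, by simp [hv0], ?_⟩
    rw [QM_eq_norm_sq zmon hzmon, map_add, hvg, Finsupp.linearCombination_single, one_smul]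
    norm_num

lemma gamma_iff_mem_closure {μ : Measure ℂ} (zmon : ℤ → Lp ℂ 2 μ)
    (hzmon : ∀ k : ℤ, (zmon k : ℂ → ℂ) =ᵐ[μ] fun z => z ^ k) :
    gammaIdx (momentMatrix μ) = 0 ↔ zmon 0 ∈ closure
      (Submodule.span ℂ {f : Lp ℂ 2 μ | ∃ m : ℤ, 0 < m ∧ f = zmon m} : Set (Lp ℂ 2 μ)) := by
  rw [gammaIdx, valueSet_eq zmon hzmon]
  set B := {x | ∃ g ∈ Submodule.span ℂ {f : Lp ℂ 2 μ | ∃ m : ℤ, 0 < m ∧ f = zmon m},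
      ‖zmon 0 + g‖ ^ 2 = x} with hB
  have hne : B.Nonempty := ⟨‖zmon 0 + 0‖ ^ 2, 0, Submodule.zero_mem _, rfl⟩
  have hnonneg : ∀ x ∈ B, (0 : ℝ) ≤ x := by rintro x ⟨g, hg, rfl⟩; positivity
  have hbdd : BddBelow B := ⟨0, fun x hx => hnonneg x hx⟩
  constructor
  · intro h
    rw [Metric.mem_closure_iff]
    intro ε hε
    have hlt : sInf B < ε ^ 2 := by rw [h]; positivity
    obtain ⟨x, hxB, hxlt⟩ := (csInf_lt_iff hbdd hne).mp hlt
    obtain ⟨g, hg, rfl⟩ := hxB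
    refine ⟨-g, Submodule.neg_mem _ hg, ?_⟩
    rw [dist_eq_norm, sub_neg_eq_add]
    exact lt_of_pow_lt_pow_left₀ 2 hε.le hxlt
  · intro h
    refine le_antisymm ?_ (le_csInf hne hnonneg)
    by_contra h'
    push_neg at h'
    obtain ⟨b, hb, hdist⟩ := Metric.mem_closure_iff.mp h (Real.sqrt (sInf B))
      (Real.sqrt_pos.mpr h')
    have hx : ‖zmon 0 + -b‖ ^ 2 ∈ B := ⟨-b, Submodule.neg_mem _ hb, rfl⟩
    have hlt2 : ‖zmon 0 + -b‖ ^ 2 < sInf B := by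
      calc ‖zmon 0 + -b‖ ^ 2 = dist (zmon 0) b ^ 2 := by rw [dist_eq_norm, sub_eq_add_neg]
        _ < Real.sqrt (sInf B) ^ 2 :=
            pow_lt_pow_left₀ hdist dist_nonneg (by norm_num)
        _ = sInf B := Real.sq_sqrt h'.le
    exact absurd (csInf_le hbdd hx) (not_le.mpr hlt2)

/-- let `μ` be a finite positive Borel measure on `ℂ` with compact infinite
support and `0 ∉ supp(μ)`; let `M = M(μ)` be its moment matrix, and let `zmon k ∈ L²(μ)`
be (the class of) the Laurent monomial `z ↦ z^k` for `k ∈ ℤ`.  Then `γ(M) = 0` if and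
only if for every `k ∈ ℤ` the function `z^k` belongs to the closure in `L²(μ)` of the
linear span of `z^{k+1}, z^{k+2}, …`. -/
theorem gamma_zero_iff_laurent_shift (μ : Measure ℂ) [IsFiniteMeasure μ]
    (hcompact : IsCompact (measSupport μ)) (hinf : (measSupport μ).Infinite)
    (h0 : (0 : ℂ) ∉ measSupport μ)
    (zmon : ℤ → Lp ℂ 2 μ) (hzmon : ∀ k : ℤ, (zmon k : ℂ → ℂ) =ᵐ[μ] fun z => z ^ k) :
    gammaIdx (momentMatrix μ) = 0 ↔
      ∀ k : ℤ, zmon k ∈ closure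
        (Submodule.span ℂ {f : Lp ℂ 2 μ | ∃ m : ℤ, k < m ∧ f = zmon m} : Set (Lp ℂ 2 μ)) := by
  rw [gamma_iff_mem_closure zmon hzmon]
  constructor
  · intro h k
    exact shift_mem hcompact h0 zmon hzmon k h
  · intro h
    exact h 0
end
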